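/- Two arrays of distinct values have the same Cartesian tree if and only if they give the same answer to every range minimum query. -/

import Mathlib

inductive BT where
  | leaf : BT
  | node : BT → BT → BT
deriving DecidableEq

namespace BT

/-- Number of nodes. -/
def size : BT → ℕ
  | leaf => 0
  | node l r => l.size + r.size + 1

/-- Inorder list of node positions (paths from the root; `false` = left step). -/
def inList : BT → List (List Bool)
  | leaf => []
  | node l r => (l.inList).map (List.cons false) ++ [] :: (r.inList).map (List.cons true)

/-- Preorder list of node positions. -/
def preList : BT → List (List Bool)
  | leaf => []
  | node l r => [] :: ((l.preList).map (List.cons false) ++ (r.preList).map (List.cons true))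

/-- Subtree rooted at a given position, if the position is valid. -/
def subtree? : BT → List Bool → Option BT
  | t, [] => some t
  | leaf, _ :: _ => none
  | node l r, b :: p => if b then r.subtree? p else l.subtree? p

/-- Size of the left spine (maximal path following left children, top node included). -/
def Lspine : BT → ℕ
  | leaf => 0
  | node l _ => l.Lspine + 1

/-- Size of the right spine. -/
def Rspine : BT → ℕ
  | leaf => 0
  | node _ r => r.Rspine + 1

/-- Size of the left inner spine of the root: right spine of the left child. -/
def lv : BT → ℕ
  | leaf => 0
  | node l _ => l.Rspine

/-- Size of the right inner spine of the root: left spine of the right child. -/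
def rv : BT → ℕ
  | leaf => 0
  | node _ r => r.Lspine

/-- Sum of `f` over all (sub)trees rooted at nodes of the tree. -/
def sumNodes (f : BT → ℕ) : BT → ℕ
  | leaf => 0
  | node l r => f (node l r) + sumNodes f l + sumNodes f r

/-- Number of leaf nodes (nodes with no children). -/
def leaves : BT → ℕ
  | leaf => 0
  | node leaf leaf => 1
  | node l r => leaves l + leaves r

end BT

/-- Longest common prefix of two paths: the LCA of two positions in a binary tree. -/
def lcp : List Bool → List Bool → List Bool
  | a :: p, b :: q => if a = b then a :: lcp p q else []
  | _, _ => []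

/-- Index of the minimum element of a list (0 if empty). -/
def minIdx {α : Type*} [LinearOrder α] (l : List α) : ℕ :=
  match l.argmin id with
  | none => 0
  | some a => l.idxOf a

/-- Cartesian tree construction with fuel. -/
def cartesianAux {α : Type*} [LinearOrder α] : ℕ → List α → BT
  | 0, _ => .leaf
  | _ + 1, [] => .leaf
  | n + 1, l@(_ :: _) =>
      .node (cartesianAux n (l.take (minIdx l))) (cartesianAux n (l.drop (minIdx l + 1)))

/-- The Cartesian tree of a list: root at the position of the minimum,
recursively built on the prefix before and the suffix after the minimum. -/
def cartesian {α : Type*} [LinearOrder α] (l : List α) : BT :=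
  cartesianAux l.length l

/-- `k` is the position of the minimum of `A` on the range `[i, j]`. -/
def isArgmin {α : Type*} [LinearOrder α] {n : ℕ} (A : Fin n → α) (i j k : Fin n) : Prop :=
  i ≤ k ∧ k ≤ j ∧ ∀ m, i ≤ m → m ≤ j → A k ≤ A m

/-- `k` is the position of the second smallest element of `A` on the range `[i, j]`. -/
def isSecondMin {α : Type*} [LinearOrder α] {n : ℕ} (A : Fin n → α) (i j k : Fin n) : Prop :=
  i ≤ k ∧ k ≤ j ∧
    ∃ m, isArgmin A i j m ∧ k ≠ m ∧ ∀ l, i ≤ l → l ≤ j → l ≠ m → A k ≤ A l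

/-- The node with inorder number `i` in `t` has a left child. -/
def hasLeftChildAt (t : BT) (i : ℕ) : Prop :=
  ∃ (p : List Bool) (ll lr r : BT),
    t.inList[i]? = some p ∧ t.subtree? p = some (.node (.node ll lr) r)

section Aux

variable {α : Type*} [LinearOrder α]

/-- Range-argmin predicate on lists. -/
def LArg (l : List α) (i j k : ℕ) : Prop :=
  ∃ _ : i ≤ k, ∃ _ : k ≤ j, ∃ hj : j < l.length,
    ∀ m, (h1 : i ≤ m) → (h2 : m ≤ j) → l[k]'(by omega) ≤ l[m]'(by omega)

theorem minIdx_lt_length {l : List α} (h : l ≠ []) : minIdx l < l.length := by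
  unfold minIdx
  rcases hx : l.argmin id with _ | a
  · exact absurd (List.argmin_eq_none.mp hx) h
  · exact List.idxOf_lt_length_iff.mpr (List.argmin_mem hx)

theorem minIdx_min {l : List α} {m : ℕ} (hm : m < l.length) (hk : minIdx l < l.length) :
    l[minIdx l] ≤ l[m] := by
  rcases hx : l.argmin id with _ | a
  · simp [List.argmin_eq_none.mp hx] at hm
  · have h1 : minIdx l = l.idxOf a := by unfold minIdx; rw [hx]
    have h2 : l[minIdx l] = a := by
      simp only [h1] at hk ⊢
      exact List.getElem_idxOf hk
    rw [h2]
    exact List.le_of_mem_argmin (l.getElem_mem hm) hx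

theorem minIdx_unique {l : List α} (hnd : l.Nodup) {k : ℕ} (hk : k < l.length)
    (hmin : ∀ m, (h : m < l.length) → l[k] ≤ l[m]) : k = minIdx l := by
  have h0 : l ≠ [] := by rintro rfl; simp at hk
  have h1 := minIdx_lt_length h0
  have := hmin (minIdx l) h1
  have := minIdx_min hk h1
  have : l[k] = l[minIdx l] := le_antisymm ‹_› ‹_›
  exact (hnd.getElem_inj_iff.mp this)

theorem cartesianAux_eq {f : ℕ} : ∀ {l : List α}, l.length ≤ f → cartesianAux f l = cartesian l := by
  induction f using Nat.strong_induction_on with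
  | _ f ih =>
    intro l hl
    match f, l with
    | 0, [] => rfl
    | f + 1, [] => rfl
    | 0, (a :: l) => simp at hl
    | f + 1, (a :: l) =>
      have hne : (a :: l) ≠ [] := by simp
      have hm := minIdx_lt_length hne
      simp only [List.length_cons] at hl hm
      rw [cartesian]
      simp only [List.length_cons]
      rw [cartesianAux, cartesianAux]
      have hpre : ((a :: l).take (minIdx (a :: l))).length ≤ f := by
        simp only [List.length_take, List.length_cons]; omega
      have hsuf : ((a :: l).drop (minIdx (a :: l) + 1)).length ≤ f := by
        simp only [List.length_drop, List.length_cons]; omega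
      have hm' : minIdx (a :: l) ≤ l.length := by omega
      have hpre' : ((a :: l).take (minIdx (a :: l))).length ≤ l.length := by
        simp only [List.length_take, List.length_cons]; omega
      have hsuf' : ((a :: l).drop (minIdx (a :: l) + 1)).length ≤ l.length := by
        simp only [List.length_drop, List.length_cons]; omega
      rw [ih f (by omega) hpre, ih f (by omega) hsuf, ih l.length (by omega) hpre',
        ih l.length (by omega) hsuf']

theorem cartesian_eq {l : List α} (h : l ≠ []) :
    cartesian l = .node (cartesian (l.take (minIdx l))) (cartesian (l.drop (minIdx l + 1))) := by
  have hm := minIdx_lt_length h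
  match l with
  | a :: l =>
    rw [cartesian, List.length_cons, cartesianAux]
    rw [cartesianAux_eq, cartesianAux_eq]
    · simp only [List.length_drop, List.length_cons]; omega
    · simp only [List.length_take, List.length_cons] at hm ⊢; omega

theorem size_cartesian : ∀ (l : List α), (cartesian l).size = l.length := by
  have H : ∀ N (l : List α), l.length ≤ N → (cartesian l).size = l.length := by
    intro N
    induction N with
    | zero =>
      intro l hl
      obtain rfl : l = [] := List.length_eq_zero_iff.mp (by omega)
      rfl
    | succ N ih =>
      intro l hl
      rcases eq_or_ne l [] with rfl | hne
      · rfl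
      · have hm := minIdx_lt_length hne
        rw [cartesian_eq hne, BT.size,
          ih _ (by simp only [List.length_take]; omega),
          ih _ (by simp only [List.length_drop]; omega)]
        simp only [List.length_take, List.length_drop]
        omega
  exact fun l => H l.length l le_rfl

theorem LArg_take {l : List α} {t i j k : ℕ} (hjt : j < t) :
    LArg (l.take t) i j k ↔ LArg l i j k := by
  constructor
  · rintro ⟨h1, h2, h3, h4⟩
    simp only [List.length_take, lt_min_iff] at h3
    exact ⟨h1, h2, h3.2, fun m hm1 hm2 => by
      have := h4 m hm1 hm2
      rwa [List.getElem_take, List.getElem_take] at this⟩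
  · rintro ⟨h1, h2, h3, h4⟩
    refine ⟨h1, h2, by simp only [List.length_take, lt_min_iff]; omega,
      fun m hm1 hm2 => ?_⟩
    rw [List.getElem_take, List.getElem_take]
    exact h4 m hm1 hm2

theorem LArg_drop {l : List α} {d i j k : ℕ} :
    LArg (l.drop d) i j k ↔ LArg l (d + i) (d + j) (d + k) := by
  constructor
  · rintro ⟨h1, h2, h3, h4⟩
    simp only [List.length_drop] at h3
    refine ⟨by omega, by omega, by omega, fun m hm1 hm2 => ?_⟩
    have := h4 (m - d) (by omega) (by omega)
    rw [List.getElem_drop, List.getElem_drop] at this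
    simpa only [show d + (m - d) = m from by omega] using this
  · rintro ⟨h1, h2, h3, h4⟩
    refine ⟨by omega, by omega, by simp only [List.length_drop]; omega,
      fun m hm1 hm2 => ?_⟩
    rw [List.getElem_drop, List.getElem_drop]
    exact h4 (d + m) (by omega) (by omega)

theorem LArg_of_mem_min {l : List α} (hnd : l.Nodup) {i j k : ℕ}
    (hi : i ≤ minIdx l) (hj : minIdx l ≤ j) (hjl : j < l.length) :
    LArg l i j k ↔ k = minIdx l := by
  have hm : minIdx l < l.length := by omega
  constructor
  · rintro ⟨h1, h2, h3, h4⟩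
    have hk : k < l.length := by omega
    have hle := h4 (minIdx l) hi hj
    have hge := minIdx_min hk hm
    exact hnd.getElem_inj_iff.mp (le_antisymm hle hge)
  · rintro rfl
    exact ⟨hi, hj, hjl, fun m hm1 hm2 => minIdx_min (by omega) hm⟩

theorem main_list {α β : Type*} [LinearOrder α] [LinearOrder β] :
    ∀ (N : ℕ) (l1 : List α) (l2 : List β), l1.length ≤ N → l1.Nodup → l2.Nodup →
      l1.length = l2.length →
      (cartesian l1 = cartesian l2 ↔ ∀ i j k, i ≤ j → (LArg l1 i j k ↔ LArg l2 i j k)) := by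
  intro N
  induction N with
  | zero =>
    intro l1 l2 hl hn1 hn2 hlen
    obtain rfl : l1 = [] := List.length_eq_zero_iff.mp (by omega)
    obtain rfl : l2 = [] := List.length_eq_zero_iff.mp (by omega)
    constructor
    · intro _ i j k _
      constructor <;> rintro ⟨_, _, h3, _⟩ <;> simp at h3
    · intro _; rfl
  | succ N ih =>
    intro l1 l2 hl hn1 hn2 hlen
    rcases eq_or_ne l1 [] with rfl | hne1
    · exact ih [] l2 (by simp) hn1 hn2 hlen
    have hne2 : l2 ≠ [] := by
      intro h
      rw [h] at hlen
      exact hne1 (List.length_eq_zero_iff.mp (by simpa using hlen))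
    have hm1 := minIdx_lt_length hne1
    have hm2 := minIdx_lt_length hne2
    constructor
    · intro heq
      rw [cartesian_eq hne1, cartesian_eq hne2] at heq
      obtain ⟨hpre, hsuf⟩ := BT.node.injEq .. ▸ heq
      have hmm : minIdx l1 = minIdx l2 := by
        have := congrArg BT.size hpre
        rwa [size_cartesian, size_cartesian, List.length_take, List.length_take,
          min_eq_left (le_of_lt hm1), min_eq_left (le_of_lt hm2)] at this
      set m := minIdx l1 with hmdef
      intro i j k hij
      rcases le_or_gt l1.length j with hjl | hjl
      · constructor <;> rintro ⟨_, _, h3, _⟩ <;> omega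
      rcases lt_or_ge j m with hjm | hmj
      · -- range inside the prefix
        rw [← LArg_take (l := l1) (t := m) hjm, ← LArg_take (l := l2) (t := m) hjm]
        have := ih (l1.take m) (l2.take m)
          (by simp only [List.length_take]; omega)
          (hn1.sublist (List.take_sublist _ _)) (hn2.sublist (List.take_sublist _ _))
          (by simp only [List.length_take]; omega)
        rw [← hmm] at hpre
        exact (this.mp hpre) i j k hij
      rcases le_or_gt i m with him | hmi
      · -- m in range
        rw [LArg_of_mem_min hn1 him hmj (by omega),
          LArg_of_mem_min hn2 (hmm ▸ him) (hmm ▸ hmj) (by omega),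
          show minIdx l1 = minIdx l2 from hmdef ▸ hmm]
      · -- range inside the suffix
        rcases lt_or_ge k i with hki | hik
        · constructor <;> rintro ⟨h1, _⟩ <;> omega
        have hkd : m + 1 + (k - (m+1)) = k := by omega
        have hid : m + 1 + (i - (m+1)) = i := by omega
        have hjd : m + 1 + (j - (m+1)) = j := by omega
        rw [← hkd, ← hid, ← hjd, ← LArg_drop, ← LArg_drop]
        have := ih (l1.drop (m+1)) (l2.drop (m + 1))
          (by simp only [List.length_drop]; omega)
          (hn1.sublist (List.drop_sublist _ _)) (hn2.sublist (List.drop_sublist _ _))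
          (by simp only [List.length_drop]; omega)
        rw [← hmm] at hsuf
        exact (this.mp hsuf) _ _ _ (by omega)
    · intro h
      have hL1 : LArg l1 0 (l1.length - 1) (minIdx l1) :=
        ⟨Nat.zero_le _, by omega, by omega, fun x hx1 hx2 => minIdx_min (by omega) hm1⟩
      have hL2 := (h 0 (l1.length - 1) (minIdx l1) (by omega)).mp hL1
      have hmm : minIdx l1 = minIdx l2 := by
        obtain ⟨_, _, _, h4⟩ := hL2
        exact minIdx_unique hn2 (by omega) (fun m hm => h4 m (Nat.zero_le _) (by omega))
      set m := minIdx l1 with hmdef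
      have hpre : cartesian (l1.take m) = cartesian (l2.take m) := by
        refine (ih _ _ (by simp only [List.length_take]; omega)
          (hn1.sublist (List.take_sublist _ _)) (hn2.sublist (List.take_sublist _ _))
          (by simp only [List.length_take]; omega)).mpr ?_
        intro i j k hij
        rcases lt_or_ge j m with hjm | hmj
        · rw [LArg_take (l := l1) hjm, LArg_take (l := l2) hjm]
          exact h i j k hij
        · constructor <;> rintro ⟨_, _, h3, _⟩ <;>
            simp only [List.length_take, lt_min_iff] at h3 <;> omega
      have hsuf : cartesian (l1.drop (m+1)) = cartesian (l2.drop (m+1)) := by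
        refine (ih _ _ (by simp only [List.length_drop]; omega)
          (hn1.sublist (List.drop_sublist _ _)) (hn2.sublist (List.drop_sublist _ _))
          (by simp only [List.length_drop]; omega)).mpr ?_
        intro i j k hij
        rw [LArg_drop, LArg_drop]
        exact h _ _ _ (by omega)
      rw [cartesian_eq hne1, cartesian_eq hne2, ← hmm, hpre, hsuf]

theorem isArgmin_iff_LArg {α : Type*} [LinearOrder α] {n : ℕ} (A : Fin n → α) (i j k : Fin n) :
    isArgmin A i j k ↔ LArg (List.ofFn A) i j k := by
  constructor
  · rintro ⟨h1, h2, h3⟩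
    refine ⟨h1, h2, by simp [j.isLt], fun m hm1 hm2 => ?_⟩
    have hm : m < n := lt_of_le_of_lt hm2 j.isLt
    rw [List.getElem_ofFn, List.getElem_ofFn]
    have := h3 ⟨m, hm⟩ hm1 hm2
    simpa using this
  · rintro ⟨h1, h2, h3, h4⟩
    refine ⟨h1, h2, fun m hm1 hm2 => ?_⟩
    have := h4 m hm1 hm2
    rw [List.getElem_ofFn, List.getElem_ofFn] at this
    simpa using this

end Aux

/-- Two arrays of distinct values have the same Cartesian tree iff they give the same
answer to every range minimum query. -/
theorem stmt3 {α β : Type*} [LinearOrder α] [LinearOrder β] {n : ℕ}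
    (A : Fin n → α) (B : Fin n → β)
    (hA : Function.Injective A) (hB : Function.Injective B) :
    cartesian (List.ofFn A) = cartesian (List.ofFn B) ↔
      ∀ i j k : Fin n, i ≤ j → (isArgmin A i j k ↔ isArgmin B i j k) := by
  rw [main_list (List.ofFn A).length (List.ofFn A) (List.ofFn B) le_rfl
    (List.nodup_ofFn.mpr hA) (List.nodup_ofFn.mpr hB) (by simp)]
  constructor
  · intro h i j k hij
    rw [isArgmin_iff_LArg, isArgmin_iff_LArg]
    exact h i j k hij
  · intro h i j k hij
    rcases lt_or_ge j n with hjn | hjn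
    · rcases le_or_gt i k with hik | hki
      · rcases le_or_gt k j with hkj | hkj
        · have hin : i < n := by omega
          have hkn : k < n := by omega
          have := h ⟨i, hin⟩ ⟨j, hjn⟩ ⟨k, hkn⟩ hij
          rw [isArgmin_iff_LArg, isArgmin_iff_LArg] at this
          exact this
        · constructor <;> rintro ⟨_, h2, _⟩ <;> omega
      · constructor <;> rintro ⟨h1, _⟩ <;> omega
    · constructor <;> rintro ⟨_, _, h3, _⟩ <;> simp at h3 <;> omega
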